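/- Let k be an algebraically closed field of characteristic 0 and q ∈ k a primitive 4th root of unity (so q² = −1). Let the 2×2 braiding matrix be q_{11} = q, q_{12} = −1, q_{21} = q, q_{22} = −1 (super type A₂). Then for every λ, μ ∈ k, the quotient of the free algebra k⟨y_1,y_2⟩ by the two-sided ideal generated by y_{112} − λ and y_2² − μ is a nontrivial algebra. -/

import Mathlib

/-- The `q`-bilinear form `q(α,β) = ∏ i j, (q i j) ^ (α i * β j)` on `ℕⁿ`-degrees. -/
noncomputable def qForm {k : Type*} [Field k] {n : ℕ} (q : Fin n → Fin n → k)
    (α β : Fin n → ℕ) : k :=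
  ∏ i : Fin n, ∏ j : Fin n, q i j ^ (α i * β j)

/-- The braided commutator on pairs (homogeneous element, its `ℕⁿ`-degree):
`[u,v]_c = u v − q(deg u, deg v) v u`. -/
noncomputable def bc {k : Type*} [Field k] {n : ℕ} (q : Fin n → Fin n → k)
    (u v : FreeAlgebra k (Fin n) × (Fin n → ℕ)) :
    FreeAlgebra k (Fin n) × (Fin n → ℕ) :=
  (u.1 * v.1 - qForm q u.2 v.2 • (v.1 * u.1), fun i => u.2 i + v.2 i)

/-- The generator `y i` of the free algebra, together with its degree `e_i`. -/
noncomputable def ygen (k : Type*) [Field k] {n : ℕ} (i : Fin n) :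
    FreeAlgebra k (Fin n) × (Fin n → ℕ) :=
  (FreeAlgebra.ι k i, fun j => if j = i then 1 else 0)

set_option maxHeartbeats 1000000 in
/-- The `y_{112}`-relation holds in the 4×4 matrix representation. -/
lemma aux_rep1 {k : Type*} [Field k] (q₀ b m : k) (hq2 : q₀ ^ 2 = -1) :
    (!![1, 0, 0, 0; 0, -1, 0, 0; 0, 0, q₀, 0; 0, 0, 0, -q₀] : Matrix (Fin 4) (Fin 4) k) *
        (!![1, 0, 0, 0; 0, -1, 0, 0; 0, 0, q₀, 0; 0, 0, 0, -q₀] *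
            !![b, 1, 1, 0; m, b, 0, -1; 0, -2*b, -b, 1; 2*b*m, 0, m, -b] +
          !![b, 1, 1, 0; m, b, 0, -1; 0, -2*b, -b, 1; 2*b*m, 0, m, -b] *
            !![1, 0, 0, 0; 0, -1, 0, 0; 0, 0, q₀, 0; 0, 0, 0, -q₀]) +
      q₀ • ((!![1, 0, 0, 0; 0, -1, 0, 0; 0, 0, q₀, 0; 0, 0, 0, -q₀] *
            !![b, 1, 1, 0; m, b, 0, -1; 0, -2*b, -b, 1; 2*b*m, 0, m, -b] +
          !![b, 1, 1, 0; m, b, 0, -1; 0, -2*b, -b, 1; 2*b*m, 0, m, -b] *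
            !![1, 0, 0, 0; 0, -1, 0, 0; 0, 0, q₀, 0; 0, 0, 0, -q₀]) *
          !![1, 0, 0, 0; 0, -1, 0, 0; 0, 0, q₀, 0; 0, 0, 0, -q₀]) -
      (2 * (1 + q₀) * b) • 1 = 0 := by
  ext i j
  fin_cases i <;> fin_cases j <;>
    simp [Matrix.mul_apply, Fin.sum_univ_four, Matrix.one_apply, Matrix.vecHead,
      Matrix.vecTail] <;>
    ring_nf <;>
    simp [hq2, show q₀ ^ 3 = -q₀ by linear_combination q₀ * hq2] <;>
    ring_nf

set_option maxHeartbeats 1000000 in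
/-- The `y₂²`-relation holds in the 4×4 matrix representation. -/
lemma aux_rep2 {k : Type*} [Field k] (b m : k) :
    (!![b, 1, 1, 0; m, b, 0, -1; 0, -2*b, -b, 1; 2*b*m, 0, m, -b] : Matrix (Fin 4) (Fin 4) k) *
        !![b, 1, 1, 0; m, b, 0, -1; 0, -2*b, -b, 1; 2*b*m, 0, m, -b] -
      (b * b + m) • 1 = 0 := by
  ext i j
  fin_cases i <;> fin_cases j <;>
    simp [Matrix.mul_apply, Fin.sum_univ_four, Matrix.one_apply] <;>
    ring

theorem statement_6 {k : Type*} [Field k] [IsAlgClosed k] [CharZero k]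
    (q₀ : k) (hq₀ : IsPrimitiveRoot q₀ 4)
    (lam μ : k)
    (q : Fin 2 → Fin 2 → k) (hq : q = ![![q₀, -1], ![q₀, -1]]) :
    (1 : FreeAlgebra k (Fin 2)) ∉ TwoSidedIdeal.span
      ({(bc q (ygen k 0) (bc q (ygen k 0) (ygen k 1))).1 - algebraMap k (FreeAlgebra k (Fin 2)) lam,
        FreeAlgebra.ι k (1 : Fin 2) ^ 2 - algebraMap k (FreeAlgebra k (Fin 2)) μ} : Set (FreeAlgebra k (Fin 2))) := by
  subst hq
  have h4 : q₀ ^ 4 = 1 := hq₀.pow_eq_one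
  have h2ne : q₀ ^ 2 ≠ 1 := hq₀.pow_ne_one_of_pos_of_lt (by norm_num) (by norm_num)
  have hq2 : q₀ ^ 2 = -1 := by
    have : (q₀ ^ 2 - 1) * (q₀ ^ 2 + 1) = 0 := by linear_combination h4
    rcases mul_eq_zero.mp this with h | h
    · exact absurd (by linear_combination h) h2ne
    · linear_combination h
  have ht : (1 + q₀) ≠ 0 := by
    intro h
    have : q₀ = -1 := by linear_combination h
    rw [this] at hq2; norm_num at hq2
  set b : k := lam / (2 * (1 + q₀)) with hbdef
  have hb : lam = 2 * (1 + q₀) * b := by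
    have h2 : (2 * (1 + q₀)) ≠ 0 := mul_ne_zero two_ne_zero ht
    rw [hbdef]
    field_simp
  set m : k := μ - b * b with hmdef
  have hμ : μ = b * b + m := by rw [hmdef]; ring
  set A : Matrix (Fin 4) (Fin 4) k :=
    !![1, 0, 0, 0; 0, -1, 0, 0; 0, 0, q₀, 0; 0, 0, 0, -q₀] with hA
  set B : Matrix (Fin 4) (Fin 4) k :=
    !![b, 1, 1, 0; m, b, 0, -1; 0, -2*b, -b, 1; 2*b*m, 0, m, -b] with hB
  set φ : FreeAlgebra k (Fin 2) →ₐ[k] Matrix (Fin 4) (Fin 4) k :=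
    FreeAlgebra.lift k ![A, B] with hφ
  intro hmem
  rw [TwoSidedIdeal.mem_span_iff] at hmem
  have h1 : (1 : FreeAlgebra k (Fin 2)) ∈ TwoSidedIdeal.ker φ.toRingHom := by
    apply hmem
    rintro x (rfl | rfl)
    · rw [SetLike.mem_coe, TwoSidedIdeal.mem_ker]
      simp only [AlgHom.toRingHom_eq_coe, RingHom.coe_coe]
      simp [bc, ygen, qForm, Fin.prod_univ_two, hφ, Algebra.algebraMap_eq_smul_one]
      rw [hb, hA, hB]
      exact aux_rep1 q₀ b m hq2
    · rw [SetLike.mem_coe, TwoSidedIdeal.mem_ker]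
      simp only [AlgHom.toRingHom_eq_coe, RingHom.coe_coe]
      simp [hφ, sq, Algebra.algebraMap_eq_smul_one]
      rw [hμ, hB]
      exact aux_rep2 b m
  rw [TwoSidedIdeal.mem_ker] at h1
  simp at h1
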